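/- (Lemma `lemma.empty.2`) Assume in addition that γ₁ ∈ (0,1) with γ₁ ≥ 2γ and that τ ≥ τ₁ > 1. Let σ ∈ {+1,−1}, ℓ ∈ ℤ^ν and n, n' ∈ ℕ₀ with (ℓ, n + σn') ≠ (0, 0), and suppose ⟨min{n,n'}⟩^α · ⟨n + σn'⟩^α ≥ 8·max{ m̄, C₀(γ₀M)^{−1} }·(M^α/γ₁)·⟨ℓ⟩^{τ₁}. Then every ω ∈ Ω₀ satisfying the first-order Melnikov conditions |ω·ℓ' + j| ≥ γ₁·⟨ℓ'⟩^{−τ₁}·⟨j⟩^α·M^{−α} for all (ℓ', j) ∈ (ℤ^ν × ℤ) \ {(0,0)} also satisfies |ω·ℓ + μ_n(ω) + σ·μ'_{n'}(ω)| ≥ γ·⟨ℓ⟩^{−τ}·⟨n + σn'⟩^α·M^{−α}. -/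

import Mathlib

noncomputable section

open MeasureTheory

/-- The closed annulus `R_M = {ω ∈ ℝ^ν : M ≤ |ω| ≤ 2M}`. -/
def RM (ν : ℕ) (M : ℝ) : Set (EuclideanSpace ℝ (Fin ν)) :=
  {ω | M ≤ ‖ω‖ ∧ ‖ω‖ ≤ 2 * M}

/-- Euclidean norm of an integer vector `ℓ ∈ ℤ^ν`. -/
def znorm {ν : ℕ} (ℓ : Fin ν → ℤ) : ℝ := Real.sqrt (∑ i, ((ℓ i : ℝ)) ^ 2)

/-- The inner product `ω·ℓ`. -/
def dotZ {ν : ℕ} (ω : EuclideanSpace ℝ (Fin ν)) (ℓ : Fin ν → ℤ) : ℝ :=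
  ∑ i, ω i * (ℓ i : ℝ)

/-- Japanese bracket of a real number, `⟨x⟩ = max {1, |x|}`. -/
def japR (x : ℝ) : ℝ := max 1 |x|

/-- Japanese bracket of an integer vector, `⟨ℓ⟩ = max {1, |ℓ|}`. -/
def japZv {ν : ℕ} (ℓ : Fin ν → ℤ) : ℝ := max 1 (znorm ℓ)

/-- The Diophantine set `Ω₀ = {ω ∈ R_M : |ω·ℓ| ≥ γ₀ M ⟨ℓ⟩^{−τ₀} ∀ ℓ ≠ 0}`. -/
def dioph (ν : ℕ) (M γ₀ τ₀ : ℝ) : Set (EuclideanSpace ℝ (Fin ν)) :=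
  {ω ∈ RM ν M | ∀ ℓ : Fin ν → ℤ, ℓ ≠ 0 → γ₀ * M * japZv ℓ ^ (-τ₀) ≤ |dotZ ω ℓ|}

/-- **Lemma `lemma.empty.2`.** Under the first-order Melnikov conditions, the second-order
balanced Melnikov conditions hold for indices with
`⟨min{n,n'}⟩^α ⟨n ± n'⟩^α ≥ 8 max{m̄, C₀(γ₀M)^{−1}} (M^α/γ₁) ⟨ℓ⟩^{τ₁}`. -/
theorem lemma_empty_2
    (ν : ℕ) (hν : 1 ≤ ν) (M : ℝ) (hM : 1 ≤ M)
    (α γ γ₀ τ₀ τ : ℝ) (hα : 0 < α) (hα1 : α < 1) (hγ : 0 < γ) (hγ1 : γ < 1)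
    (hγ₀ : 0 < γ₀) (hγ₀1 : γ₀ < 1) (hτ₀ : (ν : ℝ) - 1 < τ₀) (hτ : τ₀ ≤ τ)
    (mbar C₀ : ℝ) (hmbar : 0 < mbar) (hC₀ : 0 < C₀)
    (lam : ℕ → ℝ) (hlam : ∀ n : ℕ, |lam n - (n : ℝ)| ≤ mbar / max 1 (n : ℝ))
    (μ μ' : ℕ → EuclideanSpace ℝ (Fin ν) → ℝ)
    (hμ : ∀ n : ℕ, ∀ ω ∈ RM ν M,
      |μ n ω - lam n| ≤ C₀ / (γ₀ * M) / (max 1 (n : ℝ)) ^ α)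
    (hμ' : ∀ n : ℕ, ∀ ω ∈ RM ν M,
      |μ' n ω - lam n| ≤ C₀ / (γ₀ * M) / (max 1 (n : ℝ)) ^ α)
    (γ₁ τ₁ : ℝ) (hγ₁ : 0 < γ₁) (hγ₁1 : γ₁ < 1) (hγγ₁ : 2 * γ ≤ γ₁)
    (hτ₁ : 1 < τ₁) (hττ₁ : τ₁ ≤ τ)
    (σ : ℝ) (hσ : σ = 1 ∨ σ = -1)
    (ℓ : Fin ν → ℤ) (n n' : ℕ)
    (hnontriv : ¬(ℓ = 0 ∧ (n : ℝ) + σ * (n' : ℝ) = 0))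
    (hcond : 8 * max mbar (C₀ / (γ₀ * M)) * (M ^ α / γ₁) * japZv ℓ ^ τ₁ ≤
      (max 1 ((min n n' : ℕ) : ℝ)) ^ α * japR ((n : ℝ) + σ * (n' : ℝ)) ^ α)
    (ω : EuclideanSpace ℝ (Fin ν)) (hω : ω ∈ dioph ν M γ₀ τ₀)
    (hmel1 : ∀ (ℓ' : Fin ν → ℤ) (j : ℤ), ¬(ℓ' = 0 ∧ j = 0) →
      γ₁ * japZv ℓ' ^ (-τ₁) * japR (j : ℝ) ^ α * M ^ (-α) ≤ |dotZ ω ℓ' + (j : ℝ)|) :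
    γ * japZv ℓ ^ (-τ) * japR ((n : ℝ) + σ * (n' : ℝ)) ^ α * M ^ (-α) ≤
      |dotZ ω ℓ + μ n ω + σ * μ' n' ω| := by

  obtain ⟨hRM, -⟩ := hω
  have hM0 : (0:ℝ) < M := lt_of_lt_of_le one_pos hM
  set K := max mbar (C₀ / (γ₀ * M)) with hKdef
  have hK0 : 0 < K := lt_max_of_lt_left hmbar
  set a := max 1 (n:ℝ) with ha
  set b := max 1 (n':ℝ) with hb
  set m := max 1 ((min n n' : ℕ):ℝ) with hm
  have ha1 : (1:ℝ) ≤ a := le_max_left _ _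
  have hb1 : (1:ℝ) ≤ b := le_max_left _ _
  have hm1 : (1:ℝ) ≤ m := le_max_left _ _
  have hma : m ≤ a := max_le_max le_rfl (by exact_mod_cast Nat.cast_le.mpr (min_le_left n n'))
  have hmb : m ≤ b := max_le_max le_rfl (by exact_mod_cast Nat.cast_le.mpr (min_le_right n n'))
  have hmα : (0:ℝ) < m ^ α := Real.rpow_pos_of_pos (lt_of_lt_of_le one_pos hm1) α
  have haα : (0:ℝ) < a ^ α := Real.rpow_pos_of_pos (lt_of_lt_of_le one_pos ha1) α
  have hbα : (0:ℝ) < b ^ α := Real.rpow_pos_of_pos (lt_of_lt_of_le one_pos hb1) α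
  have hmaα : m ^ α ≤ a ^ α := Real.rpow_le_rpow (le_trans zero_le_one hm1) hma hα.le
  have hmbα : m ^ α ≤ b ^ α := Real.rpow_le_rpow (le_trans zero_le_one hm1) hmb hα.le
  have haαa : a ^ α ≤ a := by
    calc a ^ α ≤ a ^ (1:ℝ) := Real.rpow_le_rpow_of_exponent_le ha1 hα1.le
    _ = a := Real.rpow_one a
  have hbαb : b ^ α ≤ b := by
    calc b ^ α ≤ b ^ (1:ℝ) := Real.rpow_le_rpow_of_exponent_le hb1 hα1.le
    _ = b := Real.rpow_one b
  -- error bounds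
  have e1 : |μ n ω - lam n| ≤ K / m ^ α := by
    refine le_trans (hμ n ω hRM) ?_
    exact div_le_div₀ hK0.le (le_max_right mbar _) hmα hmaα
  have e2 : |μ' n' ω - lam n'| ≤ K / m ^ α := by
    refine le_trans (hμ' n' ω hRM) ?_
    exact div_le_div₀ hK0.le (le_max_right mbar _) hmα hmbα
  have e3 : |lam n - (n:ℝ)| ≤ K / m ^ α := by
    refine le_trans (hlam n) ?_
    refine le_trans (div_le_div_of_nonneg_left hmbar.le haα haαa) ?_
    exact div_le_div₀ hK0.le (le_max_left mbar _) hmα hmaα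
  have e4 : |lam n' - (n':ℝ)| ≤ K / m ^ α := by
    refine le_trans (hlam n') ?_
    refine le_trans (div_le_div_of_nonneg_left hmbar.le hbα hbαb) ?_
    exact div_le_div₀ hK0.le (le_max_left mbar _) hmα hmbα
  have hσabs : |σ| = 1 := by rcases hσ with h | h <;> simp [h]
  have Ebound : |(μ n ω + σ * μ' n' ω) - ((n:ℝ) + σ * (n':ℝ))| ≤ 4 * (K / m ^ α) := by
    have h1 : |μ n ω - (n:ℝ)| ≤ 2 * (K / m ^ α) := by
      calc |μ n ω - (n:ℝ)| = |(μ n ω - lam n) + (lam n - (n:ℝ))| := by ring_nf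
      _ ≤ |μ n ω - lam n| + |lam n - (n:ℝ)| := abs_add_le _ _
      _ ≤ 2 * (K / m ^ α) := by linarith
    have h2 : |μ' n' ω - (n':ℝ)| ≤ 2 * (K / m ^ α) := by
      calc |μ' n' ω - (n':ℝ)| = |(μ' n' ω - lam n') + (lam n' - (n':ℝ))| := by ring_nf
      _ ≤ |μ' n' ω - lam n'| + |lam n' - (n':ℝ)| := abs_add_le _ _
      _ ≤ 2 * (K / m ^ α) := by linarith
    calc |(μ n ω + σ * μ' n' ω) - ((n:ℝ) + σ * (n':ℝ))|
        = |(μ n ω - (n:ℝ)) + σ * (μ' n' ω - (n':ℝ))| := by ring_nf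
      _ ≤ |μ n ω - (n:ℝ)| + |σ * (μ' n' ω - (n':ℝ))| := abs_add_le _ _
      _ = |μ n ω - (n:ℝ)| + |μ' n' ω - (n':ℝ)| := by rw [abs_mul, hσabs, one_mul]
      _ ≤ 4 * (K / m ^ α) := by linarith
  -- the integer j
  obtain ⟨j, hj⟩ : ∃ j : ℤ, (j:ℝ) = (n:ℝ) + σ * (n':ℝ) := by
    rcases hσ with h | h <;> subst h
    · exact ⟨(n:ℤ) + (n':ℤ), by push_cast; ring⟩
    · exact ⟨(n:ℤ) - (n':ℤ), by push_cast; ring⟩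
  have hjne : ¬(ℓ = 0 ∧ j = 0) := by
    rintro ⟨h1, h2⟩
    exact hnontriv ⟨h1, by rw [← hj, h2]; norm_num⟩
  have hmel := hmel1 ℓ j hjne
  rw [hj] at hmel
  -- notation for brackets
  set L := japZv ℓ with hL
  set J := japR ((n : ℝ) + σ * (n' : ℝ)) with hJ
  have hL1 : (1:ℝ) ≤ L := le_max_left _ _
  have hJ1 : (1:ℝ) ≤ J := le_max_left _ _
  have hL0 : (0:ℝ) < L := lt_of_lt_of_le one_pos hL1
  have hJα : (0:ℝ) < J ^ α := Real.rpow_pos_of_pos (lt_of_lt_of_le one_pos hJ1) α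
  have hMα : (0:ℝ) < M ^ α := Real.rpow_pos_of_pos hM0 α
  have hLτ₁ : (0:ℝ) < L ^ τ₁ := Real.rpow_pos_of_pos hL0 τ₁
  have hLnegτ₁ : L ^ (-τ₁) = (L ^ τ₁)⁻¹ := Real.rpow_neg hL0.le τ₁
  have hLnegτ : L ^ (-τ) = (L ^ τ)⁻¹ := Real.rpow_neg hL0.le τ
  have hMneg : M ^ (-α) = (M ^ α)⁻¹ := Real.rpow_neg hM0.le α
  -- from hcond: 4K/m^α ≤ (γ₁/2) L^{-τ₁} J^α M^{-α}
  have hcond' : 4 * (K / m ^ α) ≤ γ₁ / 2 * L ^ (-τ₁) * J ^ α * M ^ (-α) := by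
    rw [hLnegτ₁, hMneg, show 4 * (K / m ^ α) = (4 * K) / m ^ α by ring, div_le_iff₀ hmα]
    calc 4 * K = γ₁ / (2 * M ^ α * L ^ τ₁) * (8 * K * (M ^ α / γ₁) * L ^ τ₁) := by
          field_simp; ring
      _ ≤ γ₁ / (2 * M ^ α * L ^ τ₁) * (m ^ α * J ^ α) :=
          mul_le_mul_of_nonneg_left hcond (by positivity)
      _ = γ₁ / 2 * (L ^ τ₁)⁻¹ * J ^ α * (M ^ α)⁻¹ * m ^ α := by
          field_simp
  -- lower bound by triangle inequality
  have htri : γ₁ * L ^ (-τ₁) * J ^ α * M ^ (-α) - 4 * (K / m ^ α)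
      ≤ |dotZ ω ℓ + μ n ω + σ * μ' n' ω| := by
    have : |dotZ ω ℓ + ((n:ℝ) + σ * (n':ℝ))| - |(μ n ω + σ * μ' n' ω) - ((n:ℝ) + σ * (n':ℝ))|
        ≤ |dotZ ω ℓ + μ n ω + σ * μ' n' ω| := by
      have := abs_sub_abs_le_abs_sub (dotZ ω ℓ + ((n:ℝ) + σ * (n':ℝ)))
        (((n:ℝ) + σ * (n':ℝ)) - (μ n ω + σ * μ' n' ω))
      have heq : dotZ ω ℓ + ((n:ℝ) + σ * (n':ℝ)) - (((n:ℝ) + σ * (n':ℝ)) - (μ n ω + σ * μ' n' ω))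
          = dotZ ω ℓ + μ n ω + σ * μ' n' ω := by ring
      rw [heq] at this
      rw [abs_sub_comm] at this
      linarith
    linarith
  -- final comparison
  have hfin : γ * L ^ (-τ) * J ^ α * M ^ (-α) ≤ γ₁ / 2 * L ^ (-τ₁) * J ^ α * M ^ (-α) := by
    have hLττ₁ : L ^ (-τ) ≤ L ^ (-τ₁) :=
      Real.rpow_le_rpow_of_exponent_le hL1 (by linarith)
    have hγ2 : γ ≤ γ₁ / 2 := by linarith
    have h0 : (0:ℝ) ≤ L ^ (-τ) := (Real.rpow_pos_of_pos hL0 _).le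
    have h0' : (0:ℝ) ≤ J ^ α * M ^ (-α) := by positivity
    calc γ * L ^ (-τ) * J ^ α * M ^ (-α) = (γ * L ^ (-τ)) * (J ^ α * M ^ (-α)) := by ring
      _ ≤ (γ₁ / 2 * L ^ (-τ₁)) * (J ^ α * M ^ (-α)) := by
          apply mul_le_mul_of_nonneg_right _ h0'
          exact mul_le_mul hγ2 hLττ₁ h0 (by linarith)
      _ = γ₁ / 2 * L ^ (-τ₁) * J ^ α * M ^ (-α) := by ring
  calc γ * L ^ (-τ) * J ^ α * M ^ (-α) ≤ γ₁ / 2 * L ^ (-τ₁) * J ^ α * M ^ (-α) := hfin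
    _ ≤ γ₁ * L ^ (-τ₁) * J ^ α * M ^ (-α) - 4 * (K / m ^ α) := by linarith
    _ ≤ |dotZ ω ℓ + μ n ω + σ * μ' n' ω| := htri
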